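/- The object X̄ = colim_{i≥0} X^(i) constructed as the sequential colimit of the pushout sequence associated to an R-algebra (X, θ) and a monad map p : R ⇒ S (with S finitary), equipped with the map φ : S X̄ → X̄ induced by the cocone of maps φ^(i+1) ∘ S c^(i), satisfies the unit and associativity axioms for an S-algebra. -/

import Mathlib

/-!
STATEMENT 8: The object `X̄ = colim_{i ≥ 0} X⁽ⁱ⁾`, constructed as the sequential
colimit of the pushout sequence associated to an `R`-algebra `(X, θ)` and a monad
map `p : R ⟶ S` (with `S` finitary), equipped with the map `φ : S X̄ ⟶ X̄` induced
by the cocone of maps `φ⁽ⁱ⁺¹⁾ ∘ S c⁽ⁱ⁾`, satisfies the unit and associativity axioms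
for an `S`-algebra: `φ ∘ η^S_{X̄} = id` and `φ ∘ μ^S_{X̄} = φ ∘ S φ`.
-/

open CategoryTheory CategoryTheory.Limits

universe v u

variable {C : Type u} [Category.{v} C]

/-- The sequence of pushouts used to construct the left adjoint to `p*`:
`pushoutChain R S p A i = (X⁽ⁱ⁾, X⁽ⁱ⁺¹⁾, (x⁽ⁱ⁺¹⁾ : X⁽ⁱ⁾ ⟶ X⁽ⁱ⁺¹⁾, φ⁽ⁱ⁺¹⁾ : S X⁽ⁱ⁾ ⟶ X⁽ⁱ⁺¹⁾))`:
`X⁽¹⁾` is the pushout of `θ : R X ⟶ X` along `p_X : R X ⟶ S X`, and inductively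
`X⁽ⁱ⁺¹⁾` is the pushout of `φ⁽ⁱ⁾ ∘ μ^S` along `S φ⁽ⁱ⁾`. -/
noncomputable def pushoutChain [HasColimits C] (R S : Monad C) (p : R ⟶ S)
    (A : Monad.Algebra R) :
    ℕ → Σ (Xp Xc : C), (Xp ⟶ Xc) × (S.obj Xp ⟶ Xc) := fun n =>
  Nat.rec (motive := fun _ => Σ (Xp Xc : C), (Xp ⟶ Xc) × (S.obj Xp ⟶ Xc))
    ⟨A.A, pushout A.a (p.app A.A), pushout.inl _ _, pushout.inr _ _⟩
    (fun _ prev =>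
      ⟨prev.2.1, pushout (S.μ.app prev.1 ≫ prev.2.2.2) (S.map prev.2.2.2),
        pushout.inl _ _, pushout.inr _ _⟩) n

/-- The functor `ℕ ⥤ C` given by the objects `X⁽ⁱ⁾` and the connecting maps
`x⁽ⁱ⁺¹⁾ : X⁽ⁱ⁾ ⟶ X⁽ⁱ⁺¹⁾` of the pushout sequence. -/
noncomputable def pushoutChainFunctor [HasColimits C] (R S : Monad C) (p : R ⟶ S)
    (A : Monad.Algebra R) : ℕ ⥤ C :=
  Functor.ofSequence (X := fun i => (pushoutChain R S p A i).1)
    (fun i => (pushoutChain R S p A i).2.2.1)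

section Aux

variable [HasColimits C] (R S : Monad C) (p : R ⟶ S) (A : Monad.Algebra R)

/-- Maps out of `X⁽ⁱ⁺¹⁾` are determined by precomposition with `x⁽ⁱ⁺¹⁾` and `φ⁽ⁱ⁺¹⁾`. -/
lemma pushoutChain_hom_ext (i : ℕ) {Y : C} {f g : (pushoutChain R S p A i).2.1 ⟶ Y}
    (h1 : (pushoutChain R S p A i).2.2.1 ≫ f = (pushoutChain R S p A i).2.2.1 ≫ g)
    (h2 : (pushoutChain R S p A i).2.2.2 ≫ f = (pushoutChain R S p A i).2.2.2 ≫ g) :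
    f = g := by
  cases i with
  | zero => exact pushout.hom_ext h1 h2
  | succ j => exact pushout.hom_ext h1 h2

lemma pushoutChain_condition_zero :
    A.a ≫ (pushoutChain R S p A 0).2.2.1 = p.app A.A ≫ (pushoutChain R S p A 0).2.2.2 :=
  pushout.condition

lemma pushoutChain_condition_succ (i : ℕ) :
    (S.μ.app (pushoutChain R S p A i).1 ≫ (pushoutChain R S p A i).2.2.2) ≫
        (pushoutChain R S p A (i + 1)).2.2.1 =
      S.map (pushoutChain R S p A i).2.2.2 ≫ (pushoutChain R S p A (i + 1)).2.2.2 :=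
  pushout.condition

/-- The unit relation `η ≫ φ⁽ⁱ⁺¹⁾ = x⁽ⁱ⁺¹⁾` at each level. -/
lemma pushoutChain_unit :
    ∀ i : ℕ, S.η.app (pushoutChain R S p A i).1 ≫ (pushoutChain R S p A i).2.2.2 =
      (pushoutChain R S p A i).2.2.1
  | 0 => by
    show S.η.app A.A ≫ pushout.inr A.a (p.app A.A) = pushout.inl A.a (p.app A.A)
    rw [← p.app_η A.A, Category.assoc, ← pushout.condition]
    have : (R.η.app A.A ≫ A.a) ≫ pushout.inl A.a (p.app A.A) =
        𝟙 A.A ≫ pushout.inl A.a (p.app A.A) := by rw [A.unit]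
    simpa using this
  | (i + 1) => by
    have IH := pushoutChain_unit i
    show S.η.app (pushoutChain R S p A i).2.1 ≫
        pushout.inr (S.μ.app (pushoutChain R S p A i).1 ≫ (pushoutChain R S p A i).2.2.2)
          (S.map (pushoutChain R S p A i).2.2.2) =
      pushout.inl (S.μ.app (pushoutChain R S p A i).1 ≫ (pushoutChain R S p A i).2.2.2)
          (S.map (pushoutChain R S p A i).2.2.2)
    apply pushoutChain_hom_ext R S p A i
    · -- compose with x⁽ⁱ⁺¹⁾
      have nat : (pushoutChain R S p A i).2.2.1 ≫ S.η.app (pushoutChain R S p A i).2.1 =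
          S.η.app (pushoutChain R S p A i).1 ≫ S.map (pushoutChain R S p A i).2.2.1 := by
        simpa using S.η.naturality (pushoutChain R S p A i).2.2.1
      rw [← Category.assoc, nat, Category.assoc, ← IH, Functor.map_comp, Category.assoc,
        ← pushout.condition]
      have key : S.map (S.η.app (pushoutChain R S p A i).1) ≫
          (S.μ.app (pushoutChain R S p A i).1 ≫ (pushoutChain R S p A i).2.2.2) ≫
            pushout.inl (S.μ.app (pushoutChain R S p A i).1 ≫ (pushoutChain R S p A i).2.2.2)
              (S.map (pushoutChain R S p A i).2.2.2) =
          (S.map (S.η.app (pushoutChain R S p A i).1) ≫ S.μ.app (pushoutChain R S p A i).1) ≫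
            (pushoutChain R S p A i).2.2.2 ≫ pushout.inl _ _ := by
        simp only [Category.assoc]
      rw [key, S.right_unit, Category.id_comp, ← Category.assoc, IH]
    · -- compose with φ⁽ⁱ⁺¹⁾
      have nat : (pushoutChain R S p A i).2.2.2 ≫ S.η.app (pushoutChain R S p A i).2.1 =
          S.η.app (S.obj (pushoutChain R S p A i).1) ≫
            S.map (pushoutChain R S p A i).2.2.2 := by
        simpa using S.η.naturality (pushoutChain R S p A i).2.2.2
      rw [← Category.assoc, nat, Category.assoc, ← pushout.condition]
      have key : S.η.app (S.obj (pushoutChain R S p A i).1) ≫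
          (S.μ.app (pushoutChain R S p A i).1 ≫ (pushoutChain R S p A i).2.2.2) ≫
            pushout.inl (S.μ.app (pushoutChain R S p A i).1 ≫ (pushoutChain R S p A i).2.2.2)
              (S.map (pushoutChain R S p A i).2.2.2) =
          (S.η.app (S.obj (pushoutChain R S p A i).1) ≫ S.μ.app (pushoutChain R S p A i).1) ≫
            (pushoutChain R S p A i).2.2.2 ≫ pushout.inl _ _ := by
        simp only [Category.assoc]
      rw [key, S.left_unit, Category.id_comp]

lemma pushoutChainFunctor_map_succ (i : ℕ) :
    (pushoutChainFunctor R S p A).map (homOfLE (Nat.le_succ i)) =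
      (pushoutChain R S p A i).2.2.1 :=
  Functor.ofSequence_map_homOfLE_succ _ i

lemma pushoutChain_ι_succ (i : ℕ) :
    (pushoutChain R S p A i).2.2.1 ≫ colimit.ι (pushoutChainFunctor R S p A) (i + 1) =
      colimit.ι (pushoutChainFunctor R S p A) i := by
  rw [← pushoutChainFunctor_map_succ R S p A i]
  exact colimit.w _ _

end Aux

/-- Any map `φ : S X̄ ⟶ X̄` compatible with the cocone maps (i.e. satisfying
`φ ∘ S c⁽ⁱ⁾ = c⁽ⁱ⁺¹⁾ ∘ φ⁽ⁱ⁺¹⁾`, the property characterising the induced map)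
satisfies the unit and associativity axioms for an `S`-algebra structure on `X̄`. -/
theorem pushoutChain_colimit_algebra [HasColimits C] (R S : Monad C) (p : R ⟶ S)
    (A : Monad.Algebra R) [PreservesFilteredColimits S.toFunctor]
    (φ : S.obj (colimit (pushoutChainFunctor R S p A)) ⟶ colimit (pushoutChainFunctor R S p A))
    (hφ : ∀ i : ℕ, S.map (colimit.ι (pushoutChainFunctor R S p A) i) ≫ φ =
      (pushoutChain R S p A i).2.2.2 ≫ colimit.ι (pushoutChainFunctor R S p A) (i + 1)) :
    S.η.app (colimit (pushoutChainFunctor R S p A)) ≫ φ = 𝟙 _ ∧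
      S.μ.app (colimit (pushoutChainFunctor R S p A)) ≫ φ = S.map φ ≫ φ := by
  constructor
  · apply colimit.hom_ext
    intro j
    have nat : colimit.ι (pushoutChainFunctor R S p A) j ≫
          S.η.app (colimit (pushoutChainFunctor R S p A)) =
        S.η.app (pushoutChain R S p A j).1 ≫
          S.map (colimit.ι (pushoutChainFunctor R S p A) j) := by
      exact S.η.naturality (colimit.ι (pushoutChainFunctor R S p A) j)
    erw [← Category.assoc, nat, Category.assoc, hφ j, ← Category.assoc,
      pushoutChain_unit R S p A j, pushoutChain_ι_succ R S p A j]
    simp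
  · haveI : PreservesFilteredColimitsOfSize.{0, 0} S.toFunctor :=
      preservesSmallestFilteredColimits_of_preservesFilteredColimits S.toFunctor
    have hS : IsColimit (S.mapCocone (colimit.cocone (pushoutChainFunctor R S p A))) :=
      isColimitOfPreserves S.toFunctor (colimit.isColimit _)
    have hSS : IsColimit (S.mapCocone (S.mapCocone
        (colimit.cocone (pushoutChainFunctor R S p A)))) :=
      isColimitOfPreserves S.toFunctor hS
    apply hSS.hom_ext
    intro j
    have ιeq : (S.mapCocone (S.mapCocone (colimit.cocone (pushoutChainFunctor R S p A)))).ι.app j =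
        S.map (S.map (colimit.ι (pushoutChainFunctor R S p A) j)) := rfl
    rw [ιeq]
    have natμ : S.map (S.map (colimit.ι (pushoutChainFunctor R S p A) j)) ≫
        S.μ.app (colimit (pushoutChainFunctor R S p A)) =
        S.μ.app (pushoutChain R S p A j).1 ≫
          S.map (colimit.ι (pushoutChainFunctor R S p A) j) := by
      exact S.μ.naturality (colimit.ι (pushoutChainFunctor R S p A) j)
    calc (show S.obj (S.obj (pushoutChain R S p A j).1) ⟶ _ from
          S.map (S.map (colimit.ι (pushoutChainFunctor R S p A) j)) ≫
          S.μ.app (colimit (pushoutChainFunctor R S p A)) ≫ φ)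
        = S.μ.app (pushoutChain R S p A j).1 ≫
            S.map (colimit.ι (pushoutChainFunctor R S p A) j) ≫ φ := by
          erw [← Category.assoc, natμ, Category.assoc]
      _ = S.μ.app (pushoutChain R S p A j).1 ≫ (pushoutChain R S p A j).2.2.2 ≫
            colimit.ι (pushoutChainFunctor R S p A) (j + 1) := by erw [hφ j]
      _ = ((S.μ.app (pushoutChain R S p A j).1 ≫ (pushoutChain R S p A j).2.2.2) ≫
            (pushoutChain R S p A (j + 1)).2.2.1) ≫
            colimit.ι (pushoutChainFunctor R S p A) (j + 1 + 1) := by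
          erw [Category.assoc, Category.assoc, pushoutChain_ι_succ R S p A (j + 1)]
      _ = S.map (pushoutChain R S p A j).2.2.2 ≫ (pushoutChain R S p A (j + 1)).2.2.2 ≫
            colimit.ι (pushoutChainFunctor R S p A) (j + 1 + 1) := by
          erw [pushoutChain_condition_succ R S p A j, Category.assoc]
      _ = S.map (pushoutChain R S p A j).2.2.2 ≫
            S.map (colimit.ι (pushoutChainFunctor R S p A) (j + 1)) ≫ φ := by erw [hφ (j + 1)]; rfl
      _ = (show S.obj (S.obj (pushoutChain R S p A j).1) ⟶ _ from
            S.map (S.map (colimit.ι (pushoutChainFunctor R S p A) j)) ≫ S.map φ ≫ φ) := by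
          conv_rhs => erw [← Category.assoc, ← Functor.map_comp, hφ j, Functor.map_comp,
            Category.assoc]
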